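/- Suppose ∇f is Lipschitz with constant L(f) and L > L(f). Then for any x ∈ C_s and any y ∈ P_{C_s}(x − (1/L)∇f(x)), one has f(x) − f(y) ≥ ((L − L(f))/2)‖x − y‖². -/

import Mathlib

noncomputable section
open scoped RealInnerProductSpace

/-- the number of nonzero components of `x` -/
def norm0 {n : ℕ} (x : EuclideanSpace ℝ (Fin n)) : ℕ :=
  (Finset.univ.filter fun i => x i ≠ 0).card

/-- the sparsity constraint set `C_s` -/
def Cs (n s : ℕ) : Set (EuclideanSpace ℝ (Fin n)) := {x | norm0 x ≤ s}

/-- the set-valued Euclidean projection onto `Cs n s` -/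
def projCs (n s : ℕ) (w : EuclideanSpace ℝ (Fin n)) : Set (EuclideanSpace ℝ (Fin n)) :=
  {y | y ∈ Cs n s ∧ ∀ z ∈ Cs n s, ‖y - w‖ ≤ ‖z - w‖}

/-- the s-th largest absolute value of a component of `x` -/
def Msval {n : ℕ} (s : ℕ) (x : EuclideanSpace ℝ (Fin n)) : ℝ :=
  (((List.ofFn fun i => |x i|).mergeSort (· ≥ ·)).getD (s - 1) 0)

lemma descent {n : ℕ} (f : EuclideanSpace ℝ (Fin n) → ℝ) (hf : ContDiff ℝ 1 f)
    (Lf : ℝ) (hlip : ∀ x y, ‖gradient f x - gradient f y‖ ≤ Lf * ‖x - y‖)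
    (x y : EuclideanSpace ℝ (Fin n)) :
    f y ≤ f x + ⟪gradient f x, y - x⟫ + Lf / 2 * ‖y - x‖ ^ 2 := by
  set v := y - x with hv
  have hd : ∀ z, HasGradientAt f (gradient f z) z :=
    fun z => ((hf.differentiable one_ne_zero) z).hasGradientAt
  have hline : ∀ t : ℝ, HasDerivAt (fun t : ℝ => x + t • v) v t := by
    intro t
    have := ((hasDerivAt_id t).smul_const v).const_add x
    simpa using this
  have hg : ∀ t : ℝ, HasDerivAt (fun t => f (x + t • v))
      ⟪gradient f (x + t • v), v⟫ t := by
    intro t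
    have := ((hd (x + t • v)).hasFDerivAt.comp_hasDerivAt t (hline t))
    simpa [InnerProductSpace.toDual_apply_apply, Function.comp_def] using this
  set φ : ℝ → ℝ := fun t => f (x + t • v) - t * ⟪gradient f x, v⟫ - Lf / 2 * t ^ 2 * ‖v‖ ^ 2
    with hφ
  have hφd : ∀ t : ℝ, HasDerivAt φ
      (⟪gradient f (x + t • v), v⟫ - ⟪gradient f x, v⟫ - Lf * t * ‖v‖ ^ 2) t := by
    intro t
    have h1 : HasDerivAt (fun t : ℝ => t * ⟪gradient f x, v⟫) ⟪gradient f x, v⟫ t := by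
      simpa using (hasDerivAt_id t).mul_const ⟪gradient f x, v⟫
    have h2 : HasDerivAt (fun t : ℝ => Lf / 2 * t ^ 2 * ‖v‖ ^ 2) (Lf * t * ‖v‖ ^ 2) t := by
      have := ((hasDerivAt_pow 2 t).const_mul (Lf / 2)).mul_const (‖v‖ ^ 2)
      convert this using 1
      all_goals first | rfl | (push_cast; ring)
    exact ((hg t).sub h1).sub h2
  have hanti : AntitoneOn φ (Set.Icc 0 1) := by
    apply antitoneOn_of_deriv_nonpos (convex_Icc 0 1)
    · exact fun t _ => (hφd t).differentiableAt.continuousAt.continuousWithinAt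
    · intro t ht
      exact (hφd t).differentiableAt.differentiableWithinAt
    · intro t ht
      rw [interior_Icc] at ht
      rw [(hφd t).deriv]
      have hb : ⟪gradient f (x + t • v) - gradient f x, v⟫ ≤ Lf * t * ‖v‖ ^ 2 := by
        calc ⟪gradient f (x + t • v) - gradient f x, v⟫
            ≤ ‖gradient f (x + t • v) - gradient f x‖ * ‖v‖ := real_inner_le_norm _ _
          _ ≤ (Lf * ‖(x + t • v) - x‖) * ‖v‖ := by
              have := hlip (x + t • v) x
              nlinarith [norm_nonneg v]
          _ = Lf * t * ‖v‖ ^ 2 := by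
              rw [add_sub_cancel_left, norm_smul]
              simp [abs_of_pos ht.1]
              ring
      rw [inner_sub_left] at hb
      linarith
  have h01 := hanti (Set.mem_Icc.mpr ⟨le_rfl, zero_le_one⟩)
      (Set.mem_Icc.mpr ⟨zero_le_one, le_rfl⟩) zero_le_one
  have hxy : x + (1:ℝ) • v = y := by rw [hv]; simp
  have e0 : φ 0 = f x := by simp only [hφ]; norm_num
  have e1 : φ 1 = f y - ⟪gradient f x, v⟫ - Lf / 2 * ‖v‖ ^ 2 := by
    simp only [hφ, hxy]; ring
  rw [e0, e1] at h01
  linarith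

/-- The sufficient decrease lemma for the hard-thresholding step. -/
theorem stmt6 {n s : ℕ} (f : EuclideanSpace ℝ (Fin n) → ℝ) (hf : ContDiff ℝ 1 f)
    (Lf L : ℝ)
    (hlip : ∀ x y, ‖gradient f x - gradient f y‖ ≤ Lf * ‖x - y‖)
    (hL : Lf < L)
    (x : EuclideanSpace ℝ (Fin n)) (hx : x ∈ Cs n s)
    (y : EuclideanSpace ℝ (Fin n))
    (hy : y ∈ projCs n s (x - (1 / L) • gradient f x)) :
    (L - Lf) / 2 * ‖x - y‖ ^ 2 ≤ f x - f y := by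
  rcases eq_or_ne x y with rfl | hne
  · simp
  -- Lf ≥ 0, hence L > 0
  have hxy_pos : 0 < ‖x - y‖ := by
    rw [norm_pos_iff]; exact sub_ne_zero_of_ne hne
  have hLf : 0 ≤ Lf := by
    have h := hlip x y
    nlinarith [norm_nonneg (gradient f x - gradient f y)]
  have hLpos : 0 < L := lt_of_le_of_lt hLf hL
  set g := gradient f x with hg
  -- projection inequality
  have hproj := hy.2 x hx
  have hrw1 : y - (x - (1 / L) • g) = (y - x) + (1 / L) • g := by abel
  have hrw2 : x - (x - (1 / L) • g) = (1 / L) • g := by abel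
  rw [hrw1, hrw2] at hproj
  have hsq : ‖(y - x) + (1 / L) • g‖ ^ 2 ≤ ‖(1 / L) • g‖ ^ 2 := by
    exact pow_le_pow_left₀ (norm_nonneg _) hproj 2
  rw [@norm_add_sq_real] at hsq
  have hinner : ⟪y - x, (1 / L) • g⟫ = (1 / L) * ⟪g, y - x⟫ := by
    rw [real_inner_smul_right, real_inner_comm]
  rw [hinner] at hsq
  have hkey : ⟪g, y - x⟫ ≤ -(L / 2) * ‖y - x‖ ^ 2 := by
    have h2 : ‖y - x‖ ^ 2 + 2 * ((1 / L) * ⟪g, y - x⟫) ≤ 0 := by linarith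
    have h3 := mul_le_mul_of_nonneg_left h2 hLpos.le
    have h4 : L * (1 / L * ⟪g, y - x⟫) = ⟪g, y - x⟫ := by field_simp
    nlinarith [h3, h4]
  have hdesc := descent f hf Lf hlip x y
  have hnorm : ‖y - x‖ = ‖x - y‖ := norm_sub_rev _ _
  rw [hnorm] at hkey hdesc
  nlinarith [hkey, hdesc]
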